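/- Let P be a set of 2n points in convex position with n red and n blue points, numbered p_0,...,p_{2n-1} clockwise. The n^2 red-blue segments can be partitioned into 2n families, each family being a separated bichromatic matching (pairwise disjoint segments crossed by a common line). Consequently, some separated bichromatic matching on P has at least n/2 edges. -/

import Mathlib

open scoped BigOperators

namespace SepMatchPaper

/-- Orientation cross product of the triple `(o, a, b)` in the plane. -/
def cross (o a b : ℝ × ℝ) : ℝ :=
  (a.1 - o.1) * (b.2 - o.2) - (a.2 - o.2) * (b.1 - o.1)

/-- The first `m` points of `p` are in convex position, listed in clockwise
order: every triple of points, taken in index order, is oriented clockwise. -/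
def ConvexCW (m : ℕ) (p : ℕ → ℝ × ℝ) : Prop :=
  ∀ i j l : ℕ, i < j → j < l → l < m → cross (p i) (p j) (p l) < 0

/-- Number of indices of color `b` in the finite set `S` (true = red, false = blue). -/
def cnt (c : ℕ → Bool) (b : Bool) (S : Finset ℕ) : ℕ :=
  (S.filter fun x => c x = b).card

/-- The coloring `c` of the `2n` points has exactly `n` red and `n` blue points. -/
def Balanced (n : ℕ) (c : ℕ → Bool) : Prop :=
  cnt c true (Finset.range (2 * n)) = n ∧ cnt c false (Finset.range (2 * n)) = n

/-- The closed segment between the points number `e.1` and `e.2`. -/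
def seg (p : ℕ → ℝ × ℝ) (e : ℕ × ℕ) : Set (ℝ × ℝ) :=
  segment ℝ (p e.1) (p e.2)

/-- `L` is a line in the plane. -/
def IsLine (L : Set (ℝ × ℝ)) : Prop :=
  ∃ a b : ℝ × ℝ, a ≠ b ∧ L = (affineSpan ℝ ({a, b} : Set (ℝ × ℝ)) : Set (ℝ × ℝ))

/-- The endpoint of the edge `e` selected by `s`. -/
def ep (e : ℕ × ℕ) (s : Bool) : ℕ := if s then e.1 else e.2

/-- `e 0, …, e (K-1)` is a separated matching on the first `m` points:
all `2K` endpoints are pairwise distinct, every edge has an admissible color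
pair (`good` is `(· ≠ ·)` for bichromatic and `(· = ·)` for monochromatic
matchings), the closed segments are pairwise disjoint, and one common line
meets all of them. -/
def SepMatching (m : ℕ) (p : ℕ → ℝ × ℝ) (c : ℕ → Bool) (good : Bool → Bool → Prop)
    (K : ℕ) (e : ℕ → ℕ × ℕ) : Prop :=
  (∀ i, i < K → (e i).1 < m ∧ (e i).2 < m) ∧
  (∀ i, i < K → good (c (e i).1) (c (e i).2)) ∧
  (∀ i j : ℕ, ∀ s t : Bool, i < K → j < K → (i, s) ≠ (j, t) → ep (e i) s ≠ ep (e j) t) ∧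
  (∀ i j, i < K → j < K → i ≠ j → Disjoint (seg p (e i)) (seg p (e j))) ∧
  ∃ L, IsLine L ∧ ∀ i, i < K → (seg p (e i) ∩ L).Nonempty

/-- `q 0, …, q (L-1)` is a non-crossing alternating path on the first `m`
points: pairwise distinct points, consecutive points of different colors, and
the relative interiors (open segments) of any two edges are disjoint. -/
def AltPath (m : ℕ) (p : ℕ → ℝ × ℝ) (c : ℕ → Bool) (L : ℕ) (q : ℕ → ℕ) : Prop :=
  (∀ i, i < L → q i < m) ∧
  (∀ i j, i < L → j < L → q i = q j → i = j) ∧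
  (∀ i, i + 1 < L → c (q i) ≠ c (q (i + 1))) ∧
  (∀ i j, i + 1 < L → j + 1 < L → i ≠ j →
    Disjoint (openSegment ℝ (p (q i)) (p (q (i + 1))))
      (openSegment ℝ (p (q j)) (p (q (j + 1)))))

/-- Starting position of the `i`-th consecutive block with lengths `len`. -/
def blockStart (len : ℕ → ℕ) (i : ℕ) : ℕ := ∑ j ∈ Finset.range i, len j

/-- The `i`-th consecutive block (as a set of indices). -/
def block (len : ℕ → ℕ) (i : ℕ) : Finset ℕ :=
  Finset.Ico (blockStart len i) (blockStart len i + len i)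

/-- The `i`-th consecutive cyclic block modulo `m`, starting at offset `s0`. -/
def cblock (m s0 : ℕ) (len : ℕ → ℕ) (i : ℕ) : Finset ℕ :=
  (Finset.Ico (s0 + blockStart len i) (s0 + blockStart len i + len i)).image (· % m)

/-- A `(k,0)`-partition of the cyclically colored point set `{0, …, 2n-1}`:
starting from the point `0`, greedily take minimal `k`-chunks (consecutive
blocks with exactly `k` points of one color — the chunk's color — fewer than
`k` of the other color, and ending at a point of the chunk's color); the
remaining uncovered points contain fewer than `k` points of each color. -/
structure KZeroPartition (n k : ℕ) (c : ℕ → Bool) where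
  t : ℕ
  len : ℕ → ℕ
  col : ℕ → Bool
  covered : blockStart len t ≤ 2 * n
  exact_maj : ∀ i, i < t → cnt c (col i) (block len i) = k
  lt_min : ∀ i, i < t → cnt c (!(col i)) (block len i) < k
  len_pos : ∀ i, i < t → 0 < len i
  last_col : ∀ i, i < t → c (blockStart len i + len i - 1) = col i
  unc_true : cnt c true (Finset.Ico (blockStart len t) (2 * n)) < k
  unc_false : cnt c false (Finset.Ico (blockStart len t) (2 * n)) < k

namespace KZeroPartition

variable {n k : ℕ} {c : ℕ → Bool}

/-- Number of red chunks. -/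
def nR (Γ : KZeroPartition n k c) : ℕ :=
  ((Finset.range Γ.t).filter fun i => Γ.col i = true).card

/-- Number of blue chunks. -/
def nB (Γ : KZeroPartition n k c) : ℕ :=
  ((Finset.range Γ.t).filter fun i => Γ.col i = false).card

/-- Average index of the chunks of color `b` (`0` if there are none); the
index of a chunk is its number of minority points divided by `k`. -/
def avg (Γ : KZeroPartition n k c) (b : Bool) : ℚ :=
  if ((Finset.range Γ.t).filter fun i => Γ.col i = b).card = 0 then 0
  else (∑ i ∈ (Finset.range Γ.t).filter fun i => Γ.col i = b,
      (cnt c (!b) (block Γ.len i) : ℚ)) /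
    (k * ((Finset.range Γ.t).filter fun i => Γ.col i = b).card)

/-- The index of the partition: the larger of the two average indices. -/
def index (Γ : KZeroPartition n k c) : ℚ := max (Γ.avg true) (Γ.avg false)

end KZeroPartition

/-- A `k`-configuration: a partition of the whole cyclic point set
`{0, …, 2n-1}` into consecutive cyclic `k`-chunks (exactly `k` points of the
chunk's color, fewer than `k` of the other color), with no uncovered points. -/
structure KConfig (n k : ℕ) (c : ℕ → Bool) where
  t : ℕ
  s0 : ℕ
  len : ℕ → ℕ
  col : ℕ → Bool
  covers : blockStart len t = 2 * n
  exact_maj : ∀ i, i < t → cnt c (col i) (cblock (2 * n) s0 len i) = k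
  lt_min : ∀ i, i < t → cnt c (!(col i)) (cblock (2 * n) s0 len i) < k

namespace KConfig

variable {n k : ℕ} {c : ℕ → Bool}

/-- Number of red chunks. -/
def nR (Γ : KConfig n k c) : ℕ :=
  ((Finset.range Γ.t).filter fun i => Γ.col i = true).card

/-- Number of blue chunks. -/
def nB (Γ : KConfig n k c) : ℕ :=
  ((Finset.range Γ.t).filter fun i => Γ.col i = false).card

/-- Number of minority-color points of the `i`-th chunk. -/
def mino (Γ : KConfig n k c) (i : ℕ) : ℕ :=
  cnt c (!(Γ.col i)) (cblock (2 * n) Γ.s0 Γ.len i)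

/-- Average index of the chunks of color `b` (`0` if there are none). -/
def avg (Γ : KConfig n k c) (b : Bool) : ℚ :=
  if ((Finset.range Γ.t).filter fun i => Γ.col i = b).card = 0 then 0
  else (∑ i ∈ (Finset.range Γ.t).filter fun i => Γ.col i = b, (Γ.mino i : ℚ)) /
    (k * ((Finset.range Γ.t).filter fun i => Γ.col i = b).card)

/-- The index of the configuration. -/
def index (Γ : KConfig n k c) : ℚ := max (Γ.avg true) (Γ.avg false)

/-- The max-index color. -/
def maxColor (Γ : KConfig n k c) : Bool :=
  if Γ.avg false ≤ Γ.avg true then true else false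

end KConfig

/-- Number of points of color `b` among the points of the cyclic interval
`[a, x]` (positions taken modulo `m`). -/
def rank (m : ℕ) (c : ℕ → Bool) (b : Bool) (a x : ℕ) : ℕ :=
  cnt c b ((Finset.Ico a (x + 1)).image (· % m))

/-- The middle `(k/3)`-subchunk of the `i`-th chunk of a `k`-configuration:
the (greedy, minimal) second of the three consecutive subchunks containing
exactly `k/3` points of the chunk's color each. -/
def KConfig.midBlock {n k : ℕ} {c : ℕ → Bool} (Γ : KConfig n k c) (i : ℕ) : Finset ℕ :=
  ((Finset.Ico (Γ.s0 + blockStart Γ.len i) (Γ.s0 + blockStart Γ.len i + Γ.len i)).filter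
      fun x =>
        (k / 3 < rank (2 * n) c (Γ.col i) (Γ.s0 + blockStart Γ.len i) x ∨
          (rank (2 * n) c (Γ.col i) (Γ.s0 + blockStart Γ.len i) x = k / 3 ∧
            c (x % (2 * n)) ≠ Γ.col i)) ∧
        (rank (2 * n) c (Γ.col i) (Γ.s0 + blockStart Γ.len i) x < 2 * (k / 3) ∨
          (rank (2 * n) c (Γ.col i) (Γ.s0 + blockStart Γ.len i) x = 2 * (k / 3) ∧
            c (x % (2 * n)) = Γ.col i))).image (· % (2 * n))

/-- Number of runs (maximal constant-color cyclic blocks) of `c` on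
`{0, …, m-1}`, counted as the number of cyclic color changes. -/
def runCount (m : ℕ) (c : ℕ → Bool) : ℕ :=
  ((Finset.range m).filter fun i => c i ≠ c ((i + 1) % m)).card

/-- `a` enumerates `L` cyclically increasing positions of a circular word of
length `m`: strictly increasing and contained in one window of length `m`. -/
def CircSubseq (m L : ℕ) (a : ℕ → ℕ) : Prop :=
  (∀ i j, i < j → j < L → a i < a j) ∧ ∀ i, i < L → a i < a 0 + m

/-- The circular word `w` (of length `m`) has an antipalindromic subsequence
of length `L`. -/
def HasAntipalSubseq (m : ℕ) (w : ℕ → Bool) (L : ℕ) : Prop :=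
  ∃ a : ℕ → ℕ, CircSubseq m L a ∧ ∀ i, i < L → w (a i % m) ≠ w (a (L - 1 - i) % m)

/-- The circular word `w` (of length `m`) has a palindromic subsequence of
length `L`. -/
def HasPalSubseq (m : ℕ) (w : ℕ → Bool) (L : ℕ) : Prop :=
  ∃ a : ℕ → ℕ, CircSubseq m L a ∧ ∀ i, i < L → w (a i % m) = w (a (L - 1 - i) % m)

/-- A set of index pairs forms a separated set of segments among the first `m`
points: pairwise disjoint segments met by a common line. -/
def SepMatchSet (m : ℕ) (p : ℕ → ℝ × ℝ) (S : Set (ℕ × ℕ)) : Prop :=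
  (∀ e ∈ S, e.1 < m ∧ e.2 < m ∧ e.1 ≠ e.2) ∧
  (∀ e ∈ S, ∀ f ∈ S, e ≠ f → Disjoint (seg p e) (seg p f)) ∧
  ∃ L, IsLine L ∧ ∀ e ∈ S, (seg p e ∩ L).Nonempty


section Aux

lemma cross_affine (o a y1 y2 : ℝ×ℝ) (γ δ : ℝ) (h : γ + δ = 1) :
    cross o a (γ•y1 + δ•y2) = γ * cross o a y1 + δ * cross o a y2 := by
  unfold cross
  simp only [Prod.fst_add, Prod.snd_add, Prod.smul_fst, Prod.smul_snd, smul_eq_mul]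
  linear_combination ((a.1-o.1)*o.2 - (a.2-o.2)*o.1) * h

lemma cross_self' (o b : ℝ×ℝ) : cross o o b = 0 := by unfold cross; ring

lemma cross_cyc (o a b : ℝ×ℝ) : cross o a b = cross a b o := by unfold cross; ring
lemma cross_swap (o a b : ℝ×ℝ) : cross o a b = -cross o b a := by unfold cross; ring

lemma combo_neg (γ δ c1 c2 : ℝ) (hγ : 0 ≤ γ) (hδ : 0 ≤ δ) (hs : γ + δ = 1)
    (h1 : c1 < 0) (h2 : c2 < 0) : γ*c1 + δ*c2 < 0 := by
  rcases eq_or_lt_of_le hγ with h | h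
  · have : δ = 1 := by linarith
    rw [← h, this]; linarith
  · nlinarith [mul_nonneg hδ (le_of_lt (neg_pos.mpr h2))]

lemma seg_disjoint (x1 x2 y1 y2 : ℝ×ℝ)
    (h : (cross x1 x2 y1 < 0 ∧ cross x1 x2 y2 < 0) ∨ (0 < cross x1 x2 y1 ∧ 0 < cross x1 x2 y2)) :
    Disjoint (segment ℝ x1 x2) (segment ℝ y1 y2) := by
  rw [Set.disjoint_left]
  rintro z hz1 hz2
  obtain ⟨α, β, hα, hβ, hαβ, rfl⟩ := hz1
  obtain ⟨γ, δ, hγ, hδ, hγδ, hzz⟩ := hz2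
  have h0 : cross x1 x2 (α•x1 + β•x2) = 0 := by
    rw [cross_affine _ _ _ _ _ _ hαβ]
    unfold cross; ring
  have h1 : cross x1 x2 (α•x1 + β•x2) = γ * cross x1 x2 y1 + δ * cross x1 x2 y2 := by
    rw [← hzz, cross_affine _ _ _ _ _ _ hγδ]
  rcases h with ⟨ha, hb⟩ | ⟨ha, hb⟩
  · have := combo_neg γ δ _ _ hγ hδ hγδ ha hb
    linarith [h0, h1]
  · have := combo_neg γ δ _ _ hγ hδ hγδ (neg_neg_of_pos ha) (neg_neg_of_pos hb)
    rw [mul_neg, mul_neg] at this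
    linarith [h0, h1]

lemma mem_line_of_cross_eq_zero (u v z : ℝ×ℝ) (huv : u ≠ v) (h : cross u v z = 0) :
    z ∈ (affineSpan ℝ ({u, v} : Set (ℝ×ℝ)) : Set (ℝ×ℝ)) := by
  have hd : v.1 - u.1 ≠ 0 ∨ v.2 - u.2 ≠ 0 := by
    by_contra hc
    push_neg at hc
    exact huv (Prod.ext (by linarith [hc.1]) (by linarith [hc.2])).symm
  unfold cross at h
  rcases hd with hd | hd
  · have hz : z = AffineMap.lineMap u v ((z.1 - u.1)/(v.1 - u.1)) := by
      rw [AffineMap.lineMap_apply]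
      apply Prod.ext <;> simp only [Prod.fst_add, Prod.snd_add, Prod.smul_fst, Prod.smul_snd,
        smul_eq_mul, Prod.fst_sub, Prod.snd_sub, vsub_eq_sub, vadd_eq_add]
      · field_simp
        ring
      · field_simp
        linear_combination h
    rw [hz]
    exact AffineMap.lineMap_mem_affineSpan_pair _ _ _
  · have hz : z = AffineMap.lineMap u v ((z.2 - u.2)/(v.2 - u.2)) := by
      rw [AffineMap.lineMap_apply]
      apply Prod.ext <;> simp only [Prod.fst_add, Prod.snd_add, Prod.smul_fst, Prod.smul_snd,
        smul_eq_mul, Prod.fst_sub, Prod.snd_sub, vsub_eq_sub, vadd_eq_add]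
      · field_simp
        linear_combination -h
      · field_simp
        ring
    rw [hz]
    exact AffineMap.lineMap_mem_affineSpan_pair _ _ _

lemma seg_meets_line (u v a b : ℝ×ℝ) (huv : u ≠ v) (ha : cross u v a < 0) (hb : 0 < cross u v b) :
    (segment ℝ a b ∩ (affineSpan ℝ ({u, v} : Set (ℝ×ℝ)) : Set (ℝ×ℝ))).Nonempty := by
  have hden : cross u v a - cross u v b < 0 := by linarith
  have hne : cross u v a - cross u v b ≠ 0 := ne_of_lt hden
  have h0 : 0 ≤ cross u v a / (cross u v a - cross u v b) := by
    rw [le_div_iff_of_neg hden]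
    linarith
  have h1 : cross u v a / (cross u v a - cross u v b) ≤ 1 := by
    rw [div_le_iff_of_neg hden]
    linarith
  refine ⟨(1 - cross u v a / (cross u v a - cross u v b)) • a +
      (cross u v a / (cross u v a - cross u v b)) • b,
    ⟨_, _, by linarith, h0, by ring, rfl⟩, ?_⟩
  apply mem_line_of_cross_eq_zero _ _ _ huv
  rw [cross_affine _ _ _ _ _ _ (by ring : (1 - cross u v a / (cross u v a - cross u v b)) +
    cross u v a / (cross u v a - cross u v b) = 1)]
  field_simp
  ring

lemma side_pos {m : ℕ} {p : ℕ → ℝ×ℝ} (hcw : ConvexCW m p) {u v w : ℕ}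
    (h1 : u < w) (h2 : w < v) (h3 : v < m) : 0 < cross (p u) (p v) (p w) := by
  have := hcw u w v h1 h2 h3
  rw [cross_swap] at this
  linarith

lemma side_neg {m : ℕ} {p : ℕ → ℝ×ℝ} (hcw : ConvexCW m p) {u v w : ℕ}
    (huv : u < v) (hv : v < m) (hw : w < m) (h : w < u ∨ v < w) :
    cross (p u) (p v) (p w) < 0 := by
  rcases h with h | h
  · have := hcw w u v h huv hv
    rw [cross_cyc] at this
    exact this
  · exact hcw u v w huv h hw

lemma seg_mm (p : ℕ → ℝ×ℝ) (a b : ℕ) :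
    segment ℝ (p a) (p b) = segment ℝ (p (min a b)) (p (max a b)) := by
  rcases le_total a b with h | h
  · rw [min_eq_left h, max_eq_right h]
  · rw [min_eq_right h, max_eq_left h, segment_symm]

lemma sum_cases {n t : ℕ} (a b : ℕ) (ha : a < 2*n) (hb : b < 2*n)
    (hmod : (a+b) % (2*n) = t) : a+b = t ∨ a+b = t+2*n := by
  have hd := Nat.div_add_mod (a+b) (2*n)
  have hq : (a+b)/(2*n) < 2 := by
    apply Nat.div_lt_of_lt_mul
    omega
  rw [hmod] at hd
  revert hd hq
  generalize (a+b)/(2*n) = q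
  intro hq hd
  interval_cases q <;> omega

lemma fam_distinct {n t : ℕ} {c : ℕ → Bool} {a b a' b' : ℕ}
    (ha : a < 2*n) (hb : b < 2*n) (ha' : a' < 2*n) (hb' : b' < 2*n)
    (hca : c a = true) (hcb : c b = false) (hca' : c a' = true) (hcb' : c b' = false)
    (hm : (a+b) % (2*n) = t) (hm' : (a'+b') % (2*n) = t) (hne : (a,b) ≠ (a',b')) :
    a ≠ a' ∧ a ≠ b' ∧ b ≠ a' ∧ b ≠ b' := by
  have s1 := sum_cases a b ha hb hm
  have s2 := sum_cases a' b' ha' hb' hm'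
  have hx : a ≠ b' := fun h => by rw [h, hcb'] at hca; exact Bool.noConfusion hca
  have hy : b ≠ a' := fun h => by rw [h, hca'] at hcb; exact Bool.noConfusion hcb
  have key : ¬(a = a' ∧ b = b') := fun ⟨h1, h2⟩ => hne (by rw [h1, h2])
  have haa : a ≠ a' := fun h => key ⟨h, by omega⟩
  have hbb : b ≠ b' := fun h => key ⟨by omega, h⟩
  exact ⟨haa, hx, hy, hbb⟩

lemma famSep (n : ℕ) (p : ℕ → ℝ×ℝ) (c : ℕ → Bool) (hcw : ConvexCW (2*n) p)
    (t : ℕ) (ht : t < 2*n) :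
    SepMatchSet (2*n) p {e : ℕ×ℕ | e.1 < 2*n ∧ e.2 < 2*n ∧ c e.1 = true ∧ c e.2 = false ∧
      (e.1+e.2) % (2*n) = t} := by
  have hsum : ∀ a b : ℕ, a < 2*n → b < 2*n → (a+b) % (2*n) = t → a+b = t ∨ a+b = t+2*n :=
    fun a b ha hb hm => sum_cases a b ha hb hm
  refine ⟨?_, ?_, ?_⟩
  · rintro ⟨a, b⟩ ⟨ha, hb, hca, hcb, -⟩
    exact ⟨ha, hb, fun h => by rw [show a = b from h, hcb] at hca; exact Bool.noConfusion hca⟩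
  · rintro ⟨a, b⟩ ⟨ha, hb, hca, hcb, hm⟩ ⟨a', b'⟩ ⟨ha', hb', hca', hcb', hm'⟩ hne
    have s1 := hsum a b ha hb hm
    have s2 := hsum a' b' ha' hb' hm'
    obtain ⟨haa, hx, hy, hbb⟩ := fam_distinct ha hb ha' hb' hca hcb hca' hcb' hm hm' hne
    have hab : a ≠ b := fun h => by rw [h, hcb] at hca; exact Bool.noConfusion hca
    have hab' : a' ≠ b' := fun h => by rw [h, hcb'] at hca'; exact Bool.noConfusion hca'
    have hcomb :
        (min a b < min a' b' ∧ min a' b' < max a b ∧ min a b < max a' b' ∧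
          max a' b' < max a b)
        ∨ (max a b < min a' b')
        ∨ (min a' b' < min a b ∧ min a b < max a' b' ∧ min a' b' < max a b ∧
          max a b < max a' b')
        ∨ (max a' b' < min a b) := by omega
    show Disjoint (segment ℝ (p a) (p b)) (segment ℝ (p a') (p b'))
    rw [seg_mm p a b, seg_mm p a' b']
    rcases hcomb with ⟨h1, h2, h3, h4⟩ | h1 | ⟨h1, h2, h3, h4⟩ | h1
    · exact seg_disjoint _ _ _ _ (Or.inr ⟨side_pos hcw h1 h2 (by omega),
        side_pos hcw h3 h4 (by omega)⟩)
    · exact seg_disjoint _ _ _ _ (Or.inl ⟨side_neg hcw (by omega) (by omega) (by omega)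
        (Or.inr h1), side_neg hcw (by omega) (by omega) (by omega) (Or.inr (by omega))⟩)
    · exact (seg_disjoint _ _ _ _ (Or.inr ⟨side_pos hcw h1 h2 (by omega),
        side_pos hcw h3 h4 (by omega)⟩)).symm
    · exact (seg_disjoint _ _ _ _ (Or.inl ⟨side_neg hcw (by omega) (by omega) (by omega)
        (Or.inr h1), side_neg hcw (by omega) (by omega) (by omega) (Or.inr (by omega))⟩)).symm
  · have hsep : ∀ a b : ℕ, a < 2*n → b < 2*n → a ≠ b → (a+b = t ∨ a+b = t+2*n) →
        a ≠ t/2 → a ≠ t/2+n → b ≠ t/2 → b ≠ t/2+n →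
        (t/2 < a ∧ a < t/2+n ∧ (b < t/2 ∨ t/2+n < b)) ∨
        (t/2 < b ∧ b < t/2+n ∧ (a < t/2 ∨ t/2+n < a)) := by
      intro a b ha hb hab hs h1 h2 h3 h4
      omega
    by_cases hpc : p (t/2) = p (t/2+n)
    · refine ⟨affineSpan ℝ ({p (t/2), p (t/2) + (1,0)} : Set (ℝ×ℝ)), ⟨_, _, ?_, rfl⟩, ?_⟩
      · intro h
        have := congrArg Prod.fst h
        simp at this
      · rintro ⟨a, b⟩ ⟨ha, hb, hca, hcb, hm⟩
        have hab : a ≠ b := fun h => by rw [h, hcb] at hca; exact Bool.noConfusion hca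
        have hu : p (t/2) ∈ affineSpan ℝ ({p (t/2), p (t/2) + (1,0)} : Set (ℝ×ℝ)) :=
          subset_affineSpan ℝ _ (Set.mem_insert _ _)
        by_cases hcase : a = t/2 ∨ a = t/2+n ∨ b = t/2 ∨ b = t/2+n
        · rcases hcase with h | h | h | h
          · exact ⟨p a, left_mem_segment ℝ _ _, by rw [h]; exact hu⟩
          · exact ⟨p a, left_mem_segment ℝ _ _, by rw [h, ← hpc]; exact hu⟩
          · exact ⟨p b, right_mem_segment ℝ _ _, by rw [h]; exact hu⟩
          · exact ⟨p b, right_mem_segment ℝ _ _, by rw [h, ← hpc]; exact hu⟩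
        · push_neg at hcase
          obtain ⟨h1, h2, h3, h4⟩ := hcase
          have hpos : 0 < cross (p (t/2)) (p (t/2+n)) (p a) ∨
              0 < cross (p (t/2)) (p (t/2+n)) (p b) := by
            rcases hsep a b ha hb hab (hsum a b ha hb hm) h1 h2 h3 h4 with
              ⟨hh1, hh2, -⟩ | ⟨hh1, hh2, -⟩
            · exact Or.inl (side_pos hcw hh1 hh2 (by omega))
            · exact Or.inr (side_pos hcw hh1 hh2 (by omega))
          rw [hpc, cross_self', cross_self'] at hpos
          rcases hpos with h | h <;> exact absurd h (lt_irrefl 0)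
    · refine ⟨affineSpan ℝ ({p (t/2), p (t/2+n)} : Set (ℝ×ℝ)), ⟨_, _, hpc, rfl⟩, ?_⟩
      rintro ⟨a, b⟩ ⟨ha, hb, hca, hcb, hm⟩
      have hab : a ≠ b := fun h => by rw [h, hcb] at hca; exact Bool.noConfusion hca
      have hu : p (t/2) ∈ affineSpan ℝ ({p (t/2), p (t/2+n)} : Set (ℝ×ℝ)) :=
        subset_affineSpan ℝ _ (Set.mem_insert _ _)
      have hv : p (t/2+n) ∈ affineSpan ℝ ({p (t/2), p (t/2+n)} : Set (ℝ×ℝ)) :=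
        subset_affineSpan ℝ _ (Set.mem_insert_of_mem _ rfl)
      by_cases hcase : a = t/2 ∨ a = t/2+n ∨ b = t/2 ∨ b = t/2+n
      · rcases hcase with h | h | h | h
        · exact ⟨p a, left_mem_segment ℝ _ _, by rw [h]; exact hu⟩
        · exact ⟨p a, left_mem_segment ℝ _ _, by rw [h]; exact hv⟩
        · exact ⟨p b, right_mem_segment ℝ _ _, by rw [h]; exact hu⟩
        · exact ⟨p b, right_mem_segment ℝ _ _, by rw [h]; exact hv⟩
      · push_neg at hcase
        obtain ⟨h1, h2, h3, h4⟩ := hcase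
        rcases hsep a b ha hb hab (hsum a b ha hb hm) h1 h2 h3 h4 with
          ⟨hh1, hh2, hh3⟩ | ⟨hh1, hh2, hh3⟩
        · have := seg_meets_line (p (t/2)) (p (t/2+n)) (p b) (p a) hpc
            (side_neg hcw (by omega) (by omega) hb hh3) (side_pos hcw hh1 hh2 (by omega))
          rwa [segment_symm] at this
        · exact seg_meets_line (p (t/2)) (p (t/2+n)) (p a) (p b) hpc
            (side_neg hcw (by omega) (by omega) ha hh3) (side_pos hcw hh1 hh2 (by omega))

end Aux

/-- the `n²` red–blue segments of a balanced convex point set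
can be partitioned into `2n` families, each a separated bichromatic matching;
consequently some separated bichromatic matching has at least `n/2` edges. -/
theorem parallel_matchings_partition
    (n : ℕ) (p : ℕ → ℝ × ℝ) (c : ℕ → Bool)
    (hcw : ConvexCW (2 * n) p) (hbal : Balanced n c) :
    (∃ φ : ℕ × ℕ → ℕ,
      (∀ a b : ℕ, a < 2 * n → b < 2 * n → c a = true → c b = false → φ (a, b) < 2 * n) ∧
      ∀ t, t < 2 * n → SepMatchSet (2 * n) p
        {e : ℕ × ℕ | e.1 < 2 * n ∧ e.2 < 2 * n ∧ c e.1 = true ∧ c e.2 = false ∧ φ e = t}) ∧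
    ∃ K e, SepMatching (2 * n) p c (· ≠ ·) K e ∧ (n : ℚ) / 2 ≤ K := by
  have hmain : ∀ t, t < 2 * n → SepMatchSet (2 * n) p
      {e : ℕ × ℕ | e.1 < 2 * n ∧ e.2 < 2 * n ∧ c e.1 = true ∧ c e.2 = false ∧
        (e.1 + e.2) % (2 * n) = t} := fun t ht => famSep n p c hcw t ht
  constructor
  · exact ⟨fun e => (e.1 + e.2) % (2 * n),
      fun a b ha hb _ _ => Nat.mod_lt _ (by omega), hmain⟩
  · rcases Nat.eq_zero_or_pos n with hn | hn
    · subst hn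
      refine ⟨0, fun _ => (0, 0), ⟨fun i hi => absurd hi (by omega),
        fun i hi => absurd hi (by omega), fun i j s t hi hj _ => absurd hi (by omega),
        fun i j hi hj _ => absurd hi (by omega),
        ⟨affineSpan ℝ ({((0:ℝ),(0:ℝ)), ((1:ℝ),(0:ℝ))} : Set (ℝ×ℝ)),
          ⟨_, _, by norm_num [Prod.ext_iff], rfl⟩, fun i hi => absurd hi (by omega)⟩⟩, by norm_num⟩
    · obtain ⟨hb1, hb2⟩ := hbal
      unfold Balanced cnt at *
      set S : Finset (ℕ × ℕ) :=
        ((Finset.range (2*n)).filter fun x => c x = true) ×ˢ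
        ((Finset.range (2*n)).filter fun x => c x = false) with hS
      have hcard : S.card = n * n := by
        rw [hS, Finset.card_product, hb1, hb2]
      have hfib : S.card = ∑ t ∈ Finset.range (2*n),
          (S.filter fun e => (e.1 + e.2) % (2*n) = t).card := by
        apply Finset.card_eq_sum_card_fiberwise
        intro x hx
        exact Finset.mem_range.mpr (Nat.mod_lt _ (by omega))
      have hex : ∃ t ∈ Finset.range (2*n),
          n * n ≤ 2*n * (S.filter fun e => (e.1 + e.2) % (2*n) = t).card := by
        apply Finset.exists_le_of_sum_le ⟨0, Finset.mem_range.mpr (by omega)⟩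
        apply le_of_eq
        rw [Finset.sum_const, Finset.card_range, smul_eq_mul, ← Finset.mul_sum, ← hfib, hcard]
      obtain ⟨t, htr, hts⟩ := hex
      have ht : t < 2*n := Finset.mem_range.mp htr
      set F : Finset (ℕ × ℕ) := S.filter (fun e => (e.1 + e.2) % (2*n) = t) with hF
      have hmem : ∀ e : ℕ × ℕ, e ∈ F →
          e.1 < 2*n ∧ e.2 < 2*n ∧ c e.1 = true ∧ c e.2 = false ∧
            (e.1 + e.2) % (2*n) = t := by
        intro e he
        rw [hF, Finset.mem_filter, hS, Finset.mem_product, Finset.mem_filter,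
          Finset.mem_filter, Finset.mem_range, Finset.mem_range] at he
        exact ⟨he.1.1.1, he.1.2.1, he.1.1.2, he.1.2.2, he.2⟩
      set ee : ℕ → ℕ × ℕ := fun i =>
        if h : i < F.card then ((F.equivFin.symm ⟨i, h⟩ : F) : ℕ × ℕ) else (0, 0) with hee
      have heF : ∀ i, i < F.card → ee i ∈ F := by
        intro i h
        rw [hee]
        simp only [dif_pos h]
        exact (F.equivFin.symm ⟨i, h⟩).2
      have hinj : ∀ i j, i < F.card → j < F.card → ee i = ee j → i = j := by
        intro i j hi hj h
        rw [hee] at h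
        simp only [dif_pos hi, dif_pos hj] at h
        have := F.equivFin.symm.injective (Subtype.coe_injective h)
        exact congrArg Fin.val this
      have hsp := hmain t ht
      obtain ⟨hsp1, hsp2, L, hL1, hL2⟩ := hsp
      have hmemS : ∀ i, i < F.card → (ee i) ∈ {e : ℕ × ℕ | e.1 < 2 * n ∧ e.2 < 2 * n ∧
          c e.1 = true ∧ c e.2 = false ∧ (e.1 + e.2) % (2 * n) = t} :=
        fun i hi => hmem (ee i) (heF i hi)
      refine ⟨F.card, ee, ⟨?_, ?_, ?_, ?_, ?_⟩, ?_⟩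
      · exact fun i hi => ⟨(hmemS i hi).1, (hmemS i hi).2.1⟩
      · intro i hi
        obtain ⟨-, -, h1, h2, -⟩ := hmemS i hi
        rw [h1, h2]
        exact Bool.noConfusion
      · intro i j s t' hi hj hne'
        obtain ⟨hi1, hi2, hi3, hi4, hi5⟩ := hmemS i hi
        obtain ⟨hj1, hj2, hj3, hj4, hj5⟩ := hmemS j hj
        by_cases hij : i = j
        · subst hij
          have hst : s ≠ t' := fun h => hne' (by rw [h])
          have hfs : (ee i).1 ≠ (ee i).2 := fun h => by
            rw [h, hj4] at hi3; exact Bool.noConfusion hi3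
          cases s <;> cases t' <;> simp only [ep, ite_true, ite_false] <;>
            first
            | exact absurd rfl hst
            | exact hfs
            | exact hfs.symm
        · have henej : ee i ≠ ee j := fun h => hij (hinj i j hi hj h)
          have hnepair : ((ee i).1, (ee i).2) ≠ ((ee j).1, (ee j).2) := by
            rw [Prod.mk.eta, Prod.mk.eta]; exact henej
          obtain ⟨d1, d2, d3, d4⟩ :=
            fam_distinct hi1 hi2 hj1 hj2 hi3 hi4 hj3 hj4 hi5 hj5 hnepair
          cases s <;> cases t' <;> simp only [ep, ite_true, ite_false]
          · exact d4
          · exact d3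
          · exact d2
          · exact d1
      · intro i j hi hj hij
        exact hsp2 (ee i) (hmemS i hi) (ee j) (hmemS j hj)
          (fun h => hij (hinj i j hi hj h))
      · exact ⟨L, hL1, fun i hi => hL2 (ee i) (hmemS i hi)⟩
      · have h1 : n * n ≤ n * (2 * F.card) := by
          calc n * n ≤ 2*n * F.card := hts
          _ = n * (2 * F.card) := by ring
        have h2 : n ≤ 2 * F.card := Nat.le_of_mul_le_mul_left h1 hn
        have h3 : (n : ℚ) ≤ 2 * F.card := by exact_mod_cast h2
        linarith


end SepMatchPaper
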